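/- Suppose y : I → ℝ is twice differentiable and satisfies y'' + x(y')² + y y' + e^(−2xy) = 0 on an open interval I, and φ : I → ℝ satisfies φ'(x) = e^(−x·y(x)) with φ a bijection onto its image with differentiable inverse ψ. Then u(t) = y(ψ(t)) satisfies u''(t) + 1 = 0. -/

import Mathlib

lemma sundman_open (I : Set ℝ) (hI : IsOpen I) (φ : ℝ → ℝ) (d : ℝ → ℝ)
    (hd : ∀ x ∈ I, 0 < d x)
    (hφ : ∀ x ∈ I, HasDerivAt φ (d x) x) : IsOpen (φ '' I) := by
  rw [isOpen_iff_forall_mem_open]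
  rintro t ⟨x, hx, rfl⟩
  obtain ⟨ε, hε, hball⟩ := Metric.isOpen_iff.1 hI x hx
  set a := x - ε/2
  set b := x + ε/2
  have hsub : Set.Icc a b ⊆ I := by
    intro z hz
    apply hball
    simp only [Metric.mem_ball, Real.dist_eq]
    rw [abs_sub_lt_iff]
    obtain ⟨h1, h2⟩ := hz
    simp only [a, b] at h1 h2
    constructor <;> linarith
  have hcont : ContinuousOn φ (Set.Icc a b) := fun z hz =>
    ((hφ z (hsub hz)).continuousAt).continuousWithinAt
  have hmono : StrictMonoOn φ (Set.Icc a b) := by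
    apply strictMonoOn_of_deriv_pos (convex_Icc a b) hcont
    intro z hz
    rw [interior_Icc] at hz
    have hzI : z ∈ I := hsub (Set.mem_Icc_of_Ioo hz)
    rw [(hφ z hzI).deriv]
    exact hd z hzI
  have hab : a < b := by simp [a, b]; linarith
  have hxab : x ∈ Set.Ioo a b := by constructor <;> simp [a, b] <;> linarith
  refine ⟨Set.Ioo (φ a) (φ b), ?_, isOpen_Ioo, ?_⟩
  · intro s hs
    obtain ⟨z, hz, rfl⟩ := intermediate_value_Ioo (le_of_lt hab) hcont hs
    exact ⟨z, hsub (Set.mem_Icc_of_Ioo hz), rfl⟩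
  · exact ⟨hmono ⟨le_rfl, le_of_lt hab⟩ (Set.mem_Icc_of_Ioo hxab) hxab.1,
      hmono (Set.mem_Icc_of_Ioo hxab) ⟨le_of_lt hab, le_rfl⟩ hxab.2⟩

theorem stmt_3 (I : Set ℝ) (hI : IsOpen I) (y φ ψ : ℝ → ℝ)
    (hy1 : ∀ x ∈ I, DifferentiableAt ℝ y x)
    (hy2 : ∀ x ∈ I, DifferentiableAt ℝ (deriv y) x)
    (hode : ∀ x ∈ I,
      deriv (deriv y) x + x * (deriv y x) ^ 2 + y x * deriv y x
        + Real.exp (-2 * x * y x) = 0)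
    (hφ : ∀ x ∈ I, HasDerivAt φ (Real.exp (-(x * y x))) x)
    (hinv : ∀ x ∈ I, ψ (φ x) = x)
    (hψ : ∀ t ∈ φ '' I, DifferentiableAt ℝ ψ t) :
    ∀ t ∈ φ '' I,
      deriv (deriv (fun s : ℝ => y (ψ s))) t + 1 = 0 := by
  -- φ '' I is open
  have hopen : IsOpen (φ '' I) := sundman_open I hI φ _
    (fun x _ => Real.exp_pos _) hφ
  -- derivative of ψ at points of φ '' I
  have hψd : ∀ x ∈ I, HasDerivAt ψ (Real.exp (x * y x)) (φ x) := by
    intro x hx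
    have hmem : φ x ∈ φ '' I := ⟨x, hx, rfl⟩
    have h1 : HasDerivAt (ψ ∘ φ) (deriv ψ (φ x) * Real.exp (-(x * y x))) x :=
      ((hψ (φ x) hmem).hasDerivAt).comp x (hφ x hx)
    have h2 : HasDerivAt (ψ ∘ φ) 1 x := by
      apply (hasDerivAt_id x).congr_of_eventuallyEq
      filter_upwards [hI.mem_nhds hx] with z hz
      exact hinv z hz
    have h3 : deriv ψ (φ x) * Real.exp (-(x * y x)) = 1 := h1.unique h2
    have h4 : deriv ψ (φ x) = Real.exp (x * y x) := by
      have h5 := eq_inv_of_mul_eq_one_right h3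
      rw [Real.exp_neg] at h5
      exact (inv_injective h5).symm
    exact h4 ▸ (hψ (φ x) hmem).hasDerivAt
  -- the first derivative of u = y ∘ ψ on φ '' I
  set g : ℝ → ℝ := fun t => deriv y (ψ t) * Real.exp (ψ t * y (ψ t)) with hg
  have hderiv1 : ∀ x ∈ I, deriv (fun s : ℝ => y (ψ s)) (φ x) = g (φ x) := by
    intro x hx
    have hyx : HasDerivAt y (deriv y x) (ψ (φ x)) := by
      rw [hinv x hx]; exact (hy1 x hx).hasDerivAt
    have hc : HasDerivAt (fun s : ℝ => y (ψ s))
        (deriv y x * Real.exp (x * y x)) (φ x) :=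
      hyx.comp (φ x) (hψd x hx)
    rw [hc.deriv, hg]
    simp [hinv x hx]
  rintro t ⟨x₀, hx₀, rfl⟩
  -- deriv u =ᶠ g near φ x₀
  have hev : deriv (fun s : ℝ => y (ψ s)) =ᶠ[nhds (φ x₀)] g := by
    filter_upwards [hopen.mem_nhds ⟨x₀, hx₀, rfl⟩] with s hs
    obtain ⟨x, hx, rfl⟩ := hs
    exact hderiv1 x hx
  rw [hev.deriv_eq]
  -- compute deriv g at φ x₀
  have hh : HasDerivAt (fun x : ℝ => x * y x) (y x₀ + x₀ * deriv y x₀) x₀ := by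
    have := (hasDerivAt_id' x₀).mul (hy1 x₀ hx₀).hasDerivAt
    exact this.congr_deriv (by ring)
  have hexp : HasDerivAt (fun x : ℝ => Real.exp (x * y x))
      (Real.exp (x₀ * y x₀) * (y x₀ + x₀ * deriv y x₀)) x₀ := hh.exp
  have hh2 : HasDerivAt (fun x : ℝ => deriv y x * Real.exp (x * y x))
      (deriv (deriv y) x₀ * Real.exp (x₀ * y x₀)
        + deriv y x₀ * (Real.exp (x₀ * y x₀) * (y x₀ + x₀ * deriv y x₀))) x₀ :=
    (hy2 x₀ hx₀).hasDerivAt.mul hexp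
  have hgd : HasDerivAt g
      ((deriv (deriv y) x₀ * Real.exp (x₀ * y x₀)
        + deriv y x₀ * (Real.exp (x₀ * y x₀) * (y x₀ + x₀ * deriv y x₀)))
        * Real.exp (x₀ * y x₀)) (φ x₀) := by
    have hh2' : HasDerivAt (fun x : ℝ => deriv y x * Real.exp (x * y x))
        (deriv (deriv y) x₀ * Real.exp (x₀ * y x₀)
          + deriv y x₀ * (Real.exp (x₀ * y x₀) * (y x₀ + x₀ * deriv y x₀)))
        (ψ (φ x₀)) := by
      rw [hinv x₀ hx₀]; exact hh2
    exact hh2'.comp (φ x₀) (hψd x₀ hx₀)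
  rw [hgd.deriv]
  -- finish with the ODE
  have hE : Real.exp (-2 * x₀ * y x₀) * (Real.exp (x₀ * y x₀) * Real.exp (x₀ * y x₀)) = 1 := by
    rw [← Real.exp_add, ← Real.exp_add, ← Real.exp_zero]
    ring_nf
  have := hode x₀ hx₀
  nlinarith [this, hE]
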